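/- Powers–Størmer inequality: for positive semidefinite n×n complex matrices A, B and s ∈ [0,1], Tr(A + B - |A - B|) ≤ 2 Tr(A^s B^(1-s)). -/

import Mathlib

open Matrix ComplexOrder

noncomputable def matAbs {n : Type*} [Fintype n] [DecidableEq n] (X : Matrix n n ℂ) :
    Matrix n n ℂ := cfc Real.sqrt (Xᴴ * X)

set_option linter.unusedSectionVars false
set_option linter.unusedVariables false
set_option maxHeartbeats 1000000
set_option synthInstance.maxHeartbeats 100000
open scoped NNReal

namespace PSAux

section CStar

variable {𝒜 : Type*} [CStarAlgebra 𝒜] [PartialOrder 𝒜] [StarOrderedRing 𝒜]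

noncomputable def rp (s : ℝ) (a : 𝒜) : 𝒜 := cfc (fun x : ℝ => x ^ s) a

lemma rpow_contOn {s : ℝ} {S : Set ℝ} (h : ∀ x ∈ S, x ≠ 0 ∨ (0:ℝ) ≤ s) :
    ContinuousOn (fun x : ℝ => x ^ s) S :=
  fun x hx => (Real.continuousAt_rpow_const x s (h x hx)).continuousWithinAt

lemma rpow_contOn_of_nonneg {s : ℝ} (hs : 0 ≤ s) {S : Set ℝ} :
    ContinuousOn (fun x : ℝ => x ^ s) S :=
  rpow_contOn (fun _ _ => Or.inr hs)

lemma rpow_contOn_of_pos {s : ℝ} {S : Set ℝ} (h : ∀ x ∈ S, (0:ℝ) < x) :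
    ContinuousOn (fun x : ℝ => x ^ s) S :=
  rpow_contOn (fun x hx => Or.inl (h x hx).ne')

lemma rp_isSelfAdjoint (s : ℝ) (a : 𝒜) (ha : IsSelfAdjoint a) : IsSelfAdjoint (rp s a) :=
  cfc_predicate _ a

lemma rp_nonneg {a : 𝒜} (s : ℝ) (ha : 0 ≤ a) : 0 ≤ rp s a :=
  cfc_nonneg fun x hx => Real.rpow_nonneg (spectrum_nonneg_of_nonneg ha hx) s

lemma rp_add {a : 𝒜} (ha : IsSelfAdjoint a) (hpa : ∀ x ∈ spectrum ℝ a, (0:ℝ) < x)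
    (c d : ℝ) : rp (c + d) a = rp c a * rp d a := by
  rw [rp, rp, rp, ← cfc_mul _ _ a (rpow_contOn_of_pos hpa) (rpow_contOn_of_pos hpa)]
  exact cfc_congr fun x hx => Real.rpow_add (hpa x hx) c d

lemma rp_zero {a : 𝒜} (ha : IsSelfAdjoint a) : rp 0 a = 1 := by
  rw [rp, show (fun x : ℝ => x ^ (0:ℝ)) = fun _ : ℝ => (1:ℝ) by
    funext x; exact Real.rpow_zero x]
  exact cfc_const_one ℝ a

lemma rp_one {a : 𝒜} (ha : IsSelfAdjoint a) : rp 1 a = a := by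
  rw [rp, show (fun x : ℝ => x ^ (1:ℝ)) = fun x : ℝ => x by
    funext x; exact Real.rpow_one x]
  exact cfc_id' ℝ a

section Midpoint

/-- conjugating `rp r a` by `rp (-(r/2)) b` is `≤ 1` whenever `rp r a ≤ rp r b`. -/
lemma conj_le_one {b : 𝒜} (hb : 0 ≤ b) (hpb : ∀ x ∈ spectrum ℝ b, (0:ℝ) < x)
    {r : ℝ} {z : 𝒜} (hz : z ≤ rp r b) :
    rp (-(r/2)) b * z * rp (-(r/2)) b ≤ 1 := by
  have hbsa : IsSelfAdjoint b := hb.isSelfAdjoint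
  have hsb2 : IsSelfAdjoint (rp (-(r/2)) b) := rp_isSelfAdjoint _ _ hbsa
  calc rp (-(r/2)) b * z * rp (-(r/2)) b
      ≤ rp (-(r/2)) b * rp r b * rp (-(r/2)) b :=
        IsSelfAdjoint.conjugate_le_conjugate hz hsb2
    _ = rp (-(r/2) + r + -(r/2)) b := by
        rw [rp_add hbsa hpb (-(r/2) + r) (-(r/2)), rp_add hbsa hpb (-(r/2)) r]
    _ = 1 := by rw [show -(r/2) + r + -(r/2) = (0:ℝ) by ring, rp_zero hbsa]

lemma rp_midpoint {a b : 𝒜} (ha : 0 ≤ a) (hb : 0 ≤ b)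
    (hpa : ∀ x ∈ spectrum ℝ a, (0:ℝ) < x) (hpb : ∀ x ∈ spectrum ℝ b, (0:ℝ) < x)
    {s t : ℝ} (hCs : rp s a ≤ rp s b) (hCt : rp t a ≤ rp t b) :
    rp ((s+t)/2) a ≤ rp ((s+t)/2) b := by
  obtain h𝒜 | h𝒜 := subsingleton_or_nontrivial 𝒜
  · exact le_of_eq (Subsingleton.elim _ _)
  have hasa : IsSelfAdjoint a := ha.isSelfAdjoint
  have hbsa : IsSelfAdjoint b := hb.isSelfAdjoint
  set u : ℝ := (s+t)/2 with hu
  -- the six basic elements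
  set as2 : 𝒜 := rp (s/2) a with has2
  set at2 : 𝒜 := rp (t/2) a with hat2
  set bs2' : 𝒜 := rp (-(s/2)) b with hbs2
  set bt2' : 𝒜 := rp (-(t/2)) b with hbt2
  set bu2' : 𝒜 := rp (-(u/2)) b with hbu2
  -- conjugated elements are ≤ 1
  have key_s : bs2' * rp s a * bs2' ≤ 1 := conj_le_one hb hpb hCs
  have key_t : bt2' * rp t a * bt2' ≤ 1 := conj_le_one hb hpb hCt
  -- nonnegativity of conjugations
  have hbs2sa : IsSelfAdjoint bs2' := rp_isSelfAdjoint _ _ hbsa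
  have hbt2sa : IsSelfAdjoint bt2' := rp_isSelfAdjoint _ _ hbsa
  have hbu2sa : IsSelfAdjoint bu2' := rp_isSelfAdjoint _ _ hbsa
  have has2sa : IsSelfAdjoint as2 := rp_isSelfAdjoint _ _ hasa
  have hat2sa : IsSelfAdjoint at2 := rp_isSelfAdjoint _ _ hasa
  -- norm bounds on e₁ = as2 * bs2' and e₂ = bt2' * at2
  have norm_e₁ : ‖as2 * bs2'‖ ≤ 1 := by
    have h1 : star (as2 * bs2') * (as2 * bs2') = bs2' * rp s a * bs2' := by
      rw [StarMul.star_mul, hbs2sa.star_eq, has2sa.star_eq]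
      have : as2 * as2 = rp s a := by
        rw [has2, ← rp_add hasa hpa, show s/2 + s/2 = s by ring]
      rw [show bs2' * as2 * (as2 * bs2') = bs2' * (as2 * as2) * bs2' by noncomm_ring, this]
    have h2 : 0 ≤ star (as2 * bs2') * (as2 * bs2') := star_mul_self_nonneg _
    have h3 : ‖star (as2 * bs2') * (as2 * bs2')‖ ≤ 1 := by
      rw [CStarAlgebra.norm_le_one_iff_of_nonneg _ h2, h1]; exact key_s
    rw [CStarRing.norm_star_mul_self] at h3
    nlinarith [norm_nonneg (as2 * bs2')]
  have norm_e₂ : ‖bt2' * at2‖ ≤ 1 := by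
    have h1 : (bt2' * at2) * star (bt2' * at2) = bt2' * rp t a * bt2' := by
      rw [StarMul.star_mul, hbt2sa.star_eq, hat2sa.star_eq]
      have : at2 * at2 = rp t a := by
        rw [hat2, ← rp_add hasa hpa, show t/2 + t/2 = t by ring]
      rw [show bt2' * at2 * (at2 * bt2') = bt2' * (at2 * at2) * bt2' by noncomm_ring, this]
    have h2 : 0 ≤ (bt2' * at2) * star (bt2' * at2) := mul_star_self_nonneg _
    have h3 : ‖(bt2' * at2) * star (bt2' * at2)‖ ≤ 1 := by
      rw [CStarAlgebra.norm_le_one_iff_of_nonneg _ h2, h1]; exact key_t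
    rw [CStarRing.norm_self_mul_star] at h3
    nlinarith [norm_nonneg (bt2' * at2)]
  -- the central element
  set m : 𝒜 := bu2' * rp u a * bu2' with hm
  have hm0 : 0 ≤ m := hbu2sa.conjugate_nonneg (rp_nonneg u ha)
  -- spectral bound for m
  have hbu : bu2' * bu2' = rp (-u) b := by
    rw [hbu2, ← rp_add hbsa hpb, show -(u/2) + -(u/2) = -u by ring]
  have hsplit_b : rp (-u) b = bt2' * bs2' := by
    rw [hbt2, hbs2, ← rp_add hbsa hpb, show -(t/2) + -(s/2) = -u by rw [hu]; ring]
  have hsplit_a : rp u a = as2 * at2 := by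
    rw [has2, hat2, ← rp_add hasa hpa, show s/2 + t/2 = u by rw [hu]; ring]
  have hspec : ∀ μ ∈ spectrum ℝ m, μ ≠ 0 → μ ≤ 1 := by
    intro μ hμ hμ0
    have swap1 : μ ∈ spectrum ℝ (bu2' * (bu2' * rp u a)) := by
      have h : μ ∈ spectrum ℝ ((bu2' * rp u a) * bu2') \ {0} := ⟨by rwa [← hm], hμ0⟩
      rw [spectrum.nonzero_mul_comm] at h
      exact h.1
    have e1 : bu2' * (bu2' * rp u a) = bt2' * (bs2' * (as2 * at2)) := by
      rw [← mul_assoc, hbu, hsplit_b, hsplit_a, mul_assoc]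
    have swap2 : μ ∈ spectrum ℝ ((bs2' * (as2 * at2)) * bt2') := by
      have h : μ ∈ spectrum ℝ (bt2' * (bs2' * (as2 * at2))) \ {0} :=
        ⟨by rwa [e1] at swap1, hμ0⟩
      rw [spectrum.nonzero_mul_comm] at h
      exact h.1
    have e2 : (bs2' * (as2 * at2)) * bt2' = (bs2' * as2) * (at2 * bt2') := by
      noncomm_ring
    have hb1 : ‖μ‖ ≤ ‖(bs2' * as2) * (at2 * bt2')‖ :=
      spectrum.norm_le_norm_of_mem (e2 ▸ swap2)
    have hb2 : ‖(bs2' * as2) * (at2 * bt2')‖ ≤ ‖bs2' * as2‖ * ‖at2 * bt2'‖ := norm_mul_le _ _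
    have hb3 : ‖bs2' * as2‖ ≤ 1 := by
      have : bs2' * as2 = star (as2 * bs2') := by
        rw [StarMul.star_mul, has2sa.star_eq, hbs2sa.star_eq]
      rw [this, norm_star]
      exact norm_e₁
    have hb4 : ‖at2 * bt2'‖ ≤ 1 := by
      have : at2 * bt2' = star (bt2' * at2) := by
        rw [StarMul.star_mul, hat2sa.star_eq, hbt2sa.star_eq]
      rw [this, norm_star]
      exact norm_e₂
    have : ‖μ‖ ≤ 1 := hb1.trans (hb2.trans (by
      nlinarith [norm_nonneg (bs2' * as2), norm_nonneg (at2 * bt2')]))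
    calc μ ≤ ‖μ‖ := by rw [Real.norm_eq_abs]; exact le_abs_self μ
      _ ≤ 1 := this
  have hmnorm : ‖m‖ ≤ 1 := by
    rcases eq_or_ne ‖m‖ 0 with h | h
    · rw [h]; norm_num
    · exact hspec _ (CStarAlgebra.norm_mem_spectrum_of_nonneg hm0) h
  have hm1 : m ≤ 1 := (CStarAlgebra.norm_le_one_iff_of_nonneg m hm0).mp hmnorm
  have hconj := IsSelfAdjoint.conjugate_le_conjugate hm1 (rp_isSelfAdjoint (u/2) b hbsa)
  have lhs_eq : rp (u/2) b * m * rp (u/2) b = rp u a := by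
    have h1 : rp (u/2) b * bu2' = 1 := by
      rw [hbu2, ← rp_add hbsa hpb, show u/2 + -(u/2) = (0:ℝ) by ring, rp_zero hbsa]
    have h2 : bu2' * rp (u/2) b = 1 := by
      rw [hbu2, ← rp_add hbsa hpb, show -(u/2) + u/2 = (0:ℝ) by ring, rp_zero hbsa]
    calc rp (u/2) b * (bu2' * rp u a * bu2') * rp (u/2) b
        = (rp (u/2) b * bu2') * rp u a * (bu2' * rp (u/2) b) := by noncomm_ring
      _ = rp u a := by rw [h1, h2, one_mul, mul_one]
  have rhs_eq : rp (u/2) b * 1 * rp (u/2) b = rp u b := by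
    rw [mul_one, ← rp_add hbsa hpb, show u/2 + u/2 = u by ring]
  rw [lhs_eq, rhs_eq] at hconj
  exact hconj

end Midpoint

section Dyadic

variable {𝒜' : Type*} [CStarAlgebra 𝒜'] [PartialOrder 𝒜'] [StarOrderedRing 𝒜']

lemma rp_dyadic {a b : 𝒜} (ha : 0 ≤ a) (hb : 0 ≤ b)
    (hpa : ∀ x ∈ spectrum ℝ a, (0:ℝ) < x) (hpb : ∀ x ∈ spectrum ℝ b, (0:ℝ) < x)
    (hab : a ≤ b) :
    ∀ m k : ℕ, k ≤ 2^m → rp ((k : ℝ) / 2^m) a ≤ rp ((k : ℝ) / 2^m) b := by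
  intro m
  induction m with
  | zero =>
    intro k hk
    rcases Nat.le_one_iff_eq_zero_or_eq_one.mp hk with rfl | rfl
    · rw [show ((0:ℕ):ℝ)/2^0 = (0:ℝ) by norm_num, rp_zero ha.isSelfAdjoint,
        rp_zero hb.isSelfAdjoint]
    · rw [show ((1:ℕ):ℝ)/2^0 = (1:ℝ) by norm_num, rp_one ha.isSelfAdjoint,
        rp_one hb.isSelfAdjoint]
      exact hab
  | succ m ih =>
    intro k hk
    set i := min k (2^m) with hi
    set j := k - i with hj
    have hi2 : i ≤ 2^m := min_le_right _ _
    have hpow : (2:ℕ)^(m+1) = 2^m + 2^m := by rw [pow_succ]; ring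
    have hj2 : j ≤ 2^m := by omega
    have hij : i + j = k := by omega
    have key : ((k:ℝ)/2^(m+1)) = (((i:ℝ)/2^m) + ((j:ℝ)/2^m))/2 := by
      rw [← add_div, div_div, ← pow_succ]
      congr 1
      push_cast [← hij]
      ring
    rw [key]
    exact rp_midpoint ha hb hpa hpb (ih i hi2) (ih j hj2)

end Dyadic

section Limits

lemma rp_tendsto_of_exponent_tendsto {a : 𝒜} (ha : 0 ≤ a) {δ : ℝ} (hδ : 0 < δ)
    (hpa : ∀ x ∈ spectrum ℝ a, δ ≤ x) {c : ℕ → ℝ} {s : ℝ}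
    (hc01 : ∀ m, c m ∈ Set.Icc (0:ℝ) 1) (hs01 : s ∈ Set.Icc (0:ℝ) 1)
    (hcs : Filter.Tendsto c Filter.atTop (nhds s)) :
    Filter.Tendsto (fun m => rp (c m) a) Filter.atTop (nhds (rp s a)) := by
  obtain h𝒜 | h𝒜 := subsingleton_or_nontrivial 𝒜
  · exact tendsto_const_nhds.congr fun m => (Subsingleton.elim _ _)
  have hasa := ha.isSelfAdjoint
  set δ' : ℝ := min δ 1 with hδ'
  have hδ'0 : 0 < δ' := lt_min hδ one_pos
  set M : ℝ := max ‖a‖ 1 with hM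
  set K : ℝ := max (|Real.log δ'|) (Real.log M) with hK
  have hK0 : 0 ≤ K := le_trans (abs_nonneg _) (le_max_left _ _)
  have hpa' : ∀ x ∈ spectrum ℝ a, (0:ℝ) < x := fun x hx => lt_of_lt_of_le hδ (hpa x hx)
  have hlog : ∀ x ∈ spectrum ℝ a, |Real.log x| ≤ K := by
    intro x hx
    have hx1 : δ' ≤ x := le_trans (min_le_left _ _) (hpa x hx)
    have hx2 : x ≤ M :=
      ((Real.le_norm_self x).trans (spectrum.norm_le_norm_of_mem hx)).trans (le_max_left _ _)
    rw [abs_le]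
    constructor
    · have h1 : Real.log δ' ≤ Real.log x := Real.log_le_log hδ'0 hx1
      have h2 : -K ≤ Real.log δ' := le_trans (neg_le_neg (le_max_left _ _)) (neg_abs_le _)
      linarith
    · exact (Real.log_le_log (lt_of_lt_of_le hδ'0 hx1) hx2).trans (le_max_right _ _)
  have key : ∀ p q : ℝ, p ∈ Set.Icc (0:ℝ) 1 → q ∈ Set.Icc (0:ℝ) 1 → K * |p - q| ≤ 1 →
      ∀ x ∈ spectrum ℝ a, |x ^ p - x ^ q| ≤ Real.exp K * (2 * (K * |p - q|)) := by
    intro p q hp hq hpq x hx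
    have hx0 : 0 < x := hpa' x hx
    have hL : |Real.log x| ≤ K := hlog x hx
    set L := Real.log x with hLdef
    rw [Real.rpow_def_of_pos hx0, Real.rpow_def_of_pos hx0]
    have e1 : Real.exp (L*p) - Real.exp (L*q) = Real.exp (L*q) * (Real.exp (L*p - L*q) - 1) := by
      rw [mul_sub, ← Real.exp_add, mul_one]
      congr 2
      ring
    have hLq : L * q ≤ K := by
      calc L * q ≤ |L * q| := le_abs_self _
        _ = |L| * |q| := abs_mul _ _
        _ ≤ K * 1 := by
            apply mul_le_mul hL _ (abs_nonneg _) hK0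
            rw [abs_le]; constructor <;> linarith [hq.1, hq.2]
        _ = K := mul_one K
    have hh : |L * p - L * q| ≤ K * |p - q| := by
      rw [← mul_sub, abs_mul]
      exact mul_le_mul_of_nonneg_right hL (abs_nonneg _)
    have hexp1 : |Real.exp (L*p - L*q) - 1| ≤ 2 * |L*p - L*q| :=
      Real.abs_exp_sub_one_le (hh.trans hpq)
    calc |Real.exp (L*p) - Real.exp (L*q)|
        = Real.exp (L*q) * |Real.exp (L*p - L*q) - 1| := by
          rw [e1, abs_mul, abs_of_pos (Real.exp_pos _)]
      _ ≤ Real.exp K * (2 * (K * |p - q|)) := by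
          apply mul_le_mul (Real.exp_le_exp.mpr hLq)
            (hexp1.trans (by linarith)) (abs_nonneg _) (Real.exp_pos _).le
  -- now conclude
  rw [tendsto_iff_norm_sub_tendsto_zero]
  have hg0 : Filter.Tendsto (fun m => Real.exp K * (2 * (K * |c m - s|)))
      Filter.atTop (nhds 0) := by
    have h1 : Filter.Tendsto (fun m => |c m - s|) Filter.atTop (nhds 0) := by
      have := (hcs.sub_const s).abs
      simpa using this
    have := ((h1.const_mul K).const_mul (2:ℝ)).const_mul (Real.exp K)
    simpa [mul_assoc] using this
  apply squeeze_zero' ?_ ?_ hg0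
  · exact Filter.Eventually.of_forall fun m => norm_nonneg _
  · have hsmall : ∀ᶠ m in Filter.atTop, K * |c m - s| ≤ 1 := by
      have h1 : ∀ᶠ m in Filter.atTop, dist (c m) s < 1/(K+1) :=
        hcs (Metric.ball_mem_nhds s (by positivity))
      filter_upwards [h1] with m hm
      rw [Real.dist_eq] at hm
      have h2 : K * |c m - s| ≤ K * (1/(K+1)) :=
        mul_le_mul_of_nonneg_left hm.le hK0
      have h3 : K * (1/(K+1)) ≤ 1 := by
        rw [mul_one_div]
        exact div_le_one_of_le₀ (by linarith) (by positivity)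
      linarith
    filter_upwards [hsmall] with m hm
    have hsub : rp (c m) a - rp s a = cfc (fun x : ℝ => x ^ (c m) - x ^ s) a := by
      rw [rp, rp, ← cfc_sub _ _ a (rpow_contOn_of_nonneg (hc01 m).1)
        (rpow_contOn_of_nonneg hs01.1)]
    rw [hsub]
    apply norm_cfc_le (by positivity)
    intro x hx
    rw [Real.norm_eq_abs]
    exact key (c m) s (hc01 m) hs01 hm x hx

lemma algebraMap_nonneg' (r : ℝ) (hr : 0 ≤ r) : (0:𝒜) ≤ algebraMap ℝ 𝒜 r := by
  have h1 : algebraMap ℝ 𝒜 (Real.sqrt r) * algebraMap ℝ 𝒜 (Real.sqrt r)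
      = algebraMap ℝ 𝒜 r := by
    rw [← _root_.map_mul, Real.mul_self_sqrt hr]
  have h2 : star (algebraMap ℝ 𝒜 (Real.sqrt r)) = algebraMap ℝ 𝒜 (Real.sqrt r) :=
    (IsSelfAdjoint.algebraMap 𝒜 (star_trivial _)).star_eq
  rw [← h1, ← h2]
  nth_rewrite 2 [h2]
  exact star_mul_self_nonneg _

lemma LH_pos {a b : 𝒜} (ha : 0 ≤ a) (hb : 0 ≤ b) {δ : ℝ} (hδ : 0 < δ)
    (hpa : ∀ x ∈ spectrum ℝ a, δ ≤ x) (hpb : ∀ x ∈ spectrum ℝ b, δ ≤ x)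
    (hab : a ≤ b) {s : ℝ} (hs0 : 0 ≤ s) (hs1 : s ≤ 1) : rp s a ≤ rp s b := by
  have hpa' : ∀ x ∈ spectrum ℝ a, (0:ℝ) < x := fun x hx => lt_of_lt_of_le hδ (hpa x hx)
  have hpb' : ∀ x ∈ spectrum ℝ b, (0:ℝ) < x := fun x hx => lt_of_lt_of_le hδ (hpb x hx)
  set c : ℕ → ℝ := fun m => ((⌊(2:ℝ)^m * s⌋₊ : ℝ)/(2:ℝ)^m) with hc
  have hfloor_le : ∀ m : ℕ, (⌊(2:ℝ)^m * s⌋₊ : ℕ) ≤ 2^m := by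
    intro m
    have h1 : (2:ℝ)^m * s ≤ ((2^m : ℕ) : ℝ) := by
      push_cast
      nlinarith [pow_pos (show (0:ℝ) < 2 by norm_num) m]
    calc ⌊(2:ℝ)^m * s⌋₊ ≤ ⌊((2^m : ℕ) : ℝ)⌋₊ := Nat.floor_le_floor h1
      _ = 2^m := Nat.floor_natCast _
  have hc01 : ∀ m, c m ∈ Set.Icc (0:ℝ) 1 := by
    intro m
    constructor
    · positivity
    · rw [div_le_one (by positivity)]
      calc ((⌊(2:ℝ)^m * s⌋₊ : ℝ)) ≤ ((2^m : ℕ) : ℝ) := by exact_mod_cast hfloor_le m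
        _ = (2:ℝ)^m := by push_cast; ring
  have hCm : ∀ m, rp (c m) a ≤ rp (c m) b := by
    intro m
    have := rp_dyadic ha hb hpa' hpb' hab m ⌊(2:ℝ)^m * s⌋₊ (hfloor_le m)
    convert this using 2
  have hcs : Filter.Tendsto c Filter.atTop (nhds s) := by
    have hup : ∀ m, c m ≤ s := by
      intro m
      rw [hc]
      have := Nat.floor_le (by positivity : (0:ℝ) ≤ (2:ℝ)^m * s)
      rw [div_le_iff₀ (by positivity)]
      linarith [this]
    have hlo : ∀ m, s - (1/2:ℝ)^m ≤ c m := by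
      intro m
      have h1 : (2:ℝ)^m * s - 1 < (⌊(2:ℝ)^m * s⌋₊ : ℝ) := Nat.sub_one_lt_floor _
      rw [hc]
      rw [le_div_iff₀ (by positivity : (0:ℝ) < (2:ℝ)^m)]
      have h2 : (1/2:ℝ)^m * (2:ℝ)^m = 1 := by
        rw [← mul_pow]
        norm_num
      nlinarith [pow_pos (show (0:ℝ) < 2 by norm_num) m]
    have hlim : Filter.Tendsto (fun m : ℕ => s - (1/2:ℝ)^m) Filter.atTop (nhds s) := by
      have h := tendsto_pow_atTop_nhds_zero_of_lt_one
        (by norm_num : (0:ℝ) ≤ 1/2) (by norm_num : (1/2:ℝ) < 1)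
      have := (tendsto_const_nhds (x := s) (f := Filter.atTop (α := ℕ))).sub h
      simpa using this
    exact tendsto_of_tendsto_of_tendsto_of_le_of_le hlim tendsto_const_nhds hlo hup
  have hta := rp_tendsto_of_exponent_tendsto ha hδ hpa hc01 ⟨hs0, hs1⟩ hcs
  have htb := rp_tendsto_of_exponent_tendsto hb hδ hpb hc01 ⟨hs0, hs1⟩ hcs
  have hclosed : IsClosed {x : 𝒜 | 0 ≤ x} := CStarAlgebra.isClosed_nonneg
  have hmem : rp s b - rp s a ∈ {x : 𝒜 | 0 ≤ x} := by
    apply hclosed.mem_of_tendsto (htb.sub hta)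
    exact Filter.Eventually.of_forall fun m => sub_nonneg.mpr (hCm m)
  exact sub_nonneg.mp hmem

lemma LH {a b : 𝒜} (ha : 0 ≤ a) (hab : a ≤ b) {s : ℝ} (hs0 : 0 ≤ s) (hs1 : s ≤ 1) :
    rp s a ≤ rp s b := by
  have hb : 0 ≤ b := ha.trans hab
  rcases eq_or_lt_of_le hs0 with rfl | hs0'
  · rw [rp_zero ha.isSelfAdjoint, rp_zero hb.isSelfAdjoint]
  · set e : ℕ → ℝ := fun m => 1/(m+1) with he
    have he0 : ∀ m : ℕ, 0 < e m := fun m => by positivity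
    have hrw : ∀ (x : 𝒜), 0 ≤ x → ∀ m : ℕ,
        rp s (x + algebraMap ℝ 𝒜 (e m)) = cfc (fun y : ℝ => (y + e m) ^ s) x := by
      intro x hx m
      have h1 : x + algebraMap ℝ 𝒜 (e m) = cfc (fun y : ℝ => y + e m) x := by
        rw [cfc_add (a := x) (fun y : ℝ => y) (fun _ => e m), cfc_id' ℝ x,
          cfc_const (e m) x]
      rw [rp, h1, ← cfc_comp' (fun y : ℝ => y ^ s) (fun y : ℝ => y + e m) x
        (rpow_contOn_of_nonneg hs0)]
    have hspec : ∀ (x : 𝒜), 0 ≤ x → ∀ m : ℕ,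
        ∀ y ∈ spectrum ℝ (x + algebraMap ℝ 𝒜 (e m)), e m ≤ y := by
      intro x hx m y hy
      rw [← spectrum.add_singleton_eq] at hy
      obtain ⟨u, hu, v, hv, rfl⟩ := Set.mem_add.mp hy
      rw [Set.mem_singleton_iff] at hv
      subst hv
      have := spectrum_nonneg_of_nonneg hx hu
      linarith
    have hle : ∀ m : ℕ, rp s (a + algebraMap ℝ 𝒜 (e m)) ≤ rp s (b + algebraMap ℝ 𝒜 (e m)) := by
      intro m
      have ham : 0 ≤ a + algebraMap ℝ 𝒜 (e m) :=
        add_nonneg ha (algebraMap_nonneg' _ (he0 m).le)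
      have hbm : 0 ≤ b + algebraMap ℝ 𝒜 (e m) :=
        add_nonneg hb (algebraMap_nonneg' _ (he0 m).le)
      exact LH_pos ham hbm (he0 m) (hspec a ha m) (hspec b hb m)
        (add_le_add_left hab _) hs0 hs1
    -- convergence
    have hconv : ∀ (x : 𝒜), 0 ≤ x → Filter.Tendsto
        (fun m => rp s (x + algebraMap ℝ 𝒜 (e m))) Filter.atTop (nhds (rp s x)) := by
      intro x hx
      rw [tendsto_iff_norm_sub_tendsto_zero]
      have hbd : ∀ m : ℕ, ‖rp s (x + algebraMap ℝ 𝒜 (e m)) - rp s x‖ ≤ (e m) ^ s := by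
        intro m
        rw [hrw x hx m, rp, ← cfc_sub _ _ x ?hc1 (rpow_contOn_of_nonneg hs0)]
        case hc1 =>
          exact ((Real.continuous_rpow_const hs0).comp (continuous_add_right (e m))).continuousOn
        apply norm_cfc_le (Real.rpow_nonneg (he0 m).le s)
        intro y hy
        have hy0 : 0 ≤ y := spectrum_nonneg_of_nonneg hx hy
        have hmono : y ^ s ≤ (y + e m) ^ s :=
          Real.rpow_le_rpow hy0 (by linarith [he0 m]) hs0
        have hsub : (y + e m) ^ s ≤ y ^ s + (e m) ^ s := by
          have := NNReal.rpow_add_le_add_rpow (⟨y, hy0⟩ : ℝ≥0) (⟨e m, (he0 m).le⟩ : ℝ≥0) hs0 hs1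
          have h2 := NNReal.coe_le_coe.mpr this
          push_cast [NNReal.coe_rpow] at h2
          convert h2 using 2 <;> rfl
        rw [Real.norm_eq_abs, abs_le]
        constructor <;> linarith [Real.rpow_nonneg (he0 m).le s]
      have hg : Filter.Tendsto (fun m : ℕ => (e m) ^ s) Filter.atTop (nhds 0) := by
        have h1 : Filter.Tendsto e Filter.atTop (nhds 0) := by
          rw [he]; exact tendsto_one_div_add_atTop_nhds_zero_nat
        have h2 := (Real.continuousAt_rpow_const 0 s (Or.inr hs0)).tendsto.comp h1
        simpa [Real.zero_rpow hs0'.ne', Function.comp_def] using h2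
      exact squeeze_zero' (Filter.Eventually.of_forall fun m => norm_nonneg _)
        (Filter.Eventually.of_forall hbd) hg
    have hclosed : IsClosed {x : 𝒜 | 0 ≤ x} := CStarAlgebra.isClosed_nonneg
    have hmem : rp s b - rp s a ∈ {x : 𝒜 | 0 ≤ x} := by
      apply hclosed.mem_of_tendsto ((hconv b hb).sub (hconv a ha))
      exact Filter.Eventually.of_forall fun m => sub_nonneg.mpr (hle m)
    exact sub_nonneg.mp hmem

end Limits

end CStar

section MatrixTransfer

variable {n : Type*} [Fintype n] [DecidableEq n]

noncomputable def φM : Matrix n n ℂ ≃⋆ₐ[ℂ] (EuclideanSpace ℂ n →L[ℂ] EuclideanSpace ℂ n) :=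
  Matrix.toEuclideanCLM

lemma φM_continuous : Continuous (φM (n := n)) := by
  let l : Matrix n n ℂ →ₗ[ℂ] (EuclideanSpace ℂ n →L[ℂ] EuclideanSpace ℂ n) :=
    { toFun := φM, map_add' := fun x y => map_add φM x y,
      map_smul' := fun c x => map_smul φM c x }
  exact l.continuous_of_finiteDimensional

lemma φM_cfc (f : ℝ → ℝ) (X : Matrix n n ℂ) (hX : X.IsHermitian)
    (hf : ContinuousOn f (spectrum ℝ X)) :
    φM (cfc f X) = cfc f (φM X) := by
  have hsa : IsSelfAdjoint (φM X) := by
    rw [_root_.IsSelfAdjoint, ← map_star]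
    exact congrArg _ hX
  exact StarAlgHomClass.map_cfc (φM (n := n)) f X hf φM_continuous hX hsa

lemma psd_exists_ct_mul_self {X : Matrix n n ℂ} (hX : X.PosSemidef) :
    ∃ C : Matrix n n ℂ, X = Cᴴ * C := by
  open scoped MatrixOrder Matrix.Norms.L2Operator in
  obtain ⟨C, hC⟩ := CStarAlgebra.nonneg_iff_eq_star_mul_self.mp hX.nonneg
  exact ⟨C, hC⟩

lemma posSemidef_iff_nonneg (X : Matrix n n ℂ) : X.PosSemidef ↔ 0 ≤ φM X := by
  constructor
  · intro hX
    obtain ⟨C, rfl⟩ := psd_exists_ct_mul_self hX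
    rw [show Cᴴ * C = star C * C from rfl, _root_.map_mul, map_star]
    exact star_mul_self_nonneg _
  · intro h
    have h1 : CFC.sqrt (φM X) * CFC.sqrt (φM X) = φM X := CFC.sqrt_mul_sqrt_self _ h
    have hysa : IsSelfAdjoint (CFC.sqrt (φM X)) := (CFC.sqrt_nonneg (a := φM X)).isSelfAdjoint
    set y := CFC.sqrt (φM X) with hy
    have h2 : X = star (φM.symm y) * (φM.symm y) := by
      calc X = φM.symm (φM X) := ((φM (n := n)).symm_apply_apply X).symm
        _ = φM.symm (y * y) := by rw [h1]
        _ = φM.symm y * φM.symm y := _root_.map_mul _ _ _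
        _ = star (φM.symm y) * φM.symm y := by rw [← map_star, hysa.star_eq]
    rw [h2, show star (φM.symm y) = (φM.symm y)ᴴ from rfl]
    exact Matrix.posSemidef_conjTranspose_mul_self _
    
lemma spec_nonneg_of_psd {X : Matrix n n ℂ} (hX : X.PosSemidef) :
    ∀ x ∈ spectrum ℝ X, (0:ℝ) ≤ x := by
  intro x hx
  rw [Matrix.IsHermitian.spectrum_real_eq_range_eigenvalues (hA := hX.1)] at hx
  obtain ⟨i, rfl⟩ := hx
  exact hX.eigenvalues_nonneg i

noncomputable def φAlg : Matrix n n ℂ ≃ₐ[ℂ] (EuclideanSpace ℂ n →L[ℂ] EuclideanSpace ℂ n) :=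
  AlgEquiv.ofRingEquiv (f := (φM (n := n)).toRingEquiv) (fun c => AlgHomClass.commutes φM c)

lemma spectrum_φM (X : Matrix n n ℂ) : spectrum ℝ (φM X) = spectrum ℝ X := by
  have h := AlgEquiv.spectrum_eq (φAlg (n := n)) X
  rw [show φAlg X = φM X from rfl] at h
  rw [← spectrum.preimage_algebraMap ℂ, h, spectrum.preimage_algebraMap ℂ]

lemma LH_M {X Y : Matrix n n ℂ} (hX : X.PosSemidef) (hY : Y.PosSemidef)
    (hXY : (Y - X).PosSemidef) {s : ℝ} (hs0 : 0 ≤ s) (hs1 : s ≤ 1) :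
    (cfc (fun x : ℝ => x ^ s) Y - cfc (fun x : ℝ => x ^ s) X).PosSemidef := by
  rw [posSemidef_iff_nonneg, _root_.map_sub, φM_cfc _ _ hY.1 (rpow_contOn_of_nonneg hs0),
    φM_cfc _ _ hX.1 (rpow_contOn_of_nonneg hs0)]
  have h1 : 0 ≤ φM X := (posSemidef_iff_nonneg X).mp hX
  have h2 : φM X ≤ φM Y := by
    rw [← sub_nonneg, ← _root_.map_sub]
    exact (posSemidef_iff_nonneg _).mp hXY
  have h3 := LH h1 h2 hs0 hs1
  rw [rp, rp] at h3
  exact sub_nonneg.mpr h3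

lemma cfc_psd {X : Matrix n n ℂ} (hX : X.IsHermitian) {f : ℝ → ℝ}
    (hf : ContinuousOn f (spectrum ℝ X)) (hf0 : ∀ x ∈ spectrum ℝ X, 0 ≤ f x) :
    (cfc f X).PosSemidef := by
  rw [posSemidef_iff_nonneg, φM_cfc f X hX hf]
  apply cfc_nonneg
  intro x hx
  rw [spectrum_φM] at hx
  exact hf0 x hx

lemma trace_psd_nonneg {X : Matrix n n ℂ} (hX : X.PosSemidef) : 0 ≤ X.trace := by
  obtain ⟨C, rfl⟩ := psd_exists_ct_mul_self hX
  rw [Matrix.trace]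
  refine Finset.sum_nonneg fun i _ => ?_
  rw [Matrix.diag_apply, Matrix.mul_apply]
  refine Finset.sum_nonneg fun j _ => ?_
  simpa [Matrix.conjTranspose_apply] using star_mul_self_nonneg (C j i)

lemma trace_mul_psd_nonneg {X Y : Matrix n n ℂ} (hX : X.PosSemidef) (hY : Y.PosSemidef) :
    0 ≤ (X * Y).trace := by
  obtain ⟨C, rfl⟩ := psd_exists_ct_mul_self hX
  rw [← Matrix.trace_mul_cycle C Y Cᴴ]
  exact trace_psd_nonneg (hY.mul_mul_conjTranspose_same C)

lemma rpow_mul_rpow_one_sub {x s : ℝ} (hx : 0 ≤ x) (hs0 : 0 ≤ s) :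
    x ^ s * x ^ (1 - s) = x := by
  rcases eq_or_lt_of_le hx with hx0 | hx0
  · rcases eq_or_ne s 0 with rfl | hs
    · rw [← hx0, Real.rpow_zero, Real.zero_rpow (by norm_num : (1:ℝ) - 0 ≠ 0)]
      ring
    · rw [← hx0, Real.zero_rpow hs]
      ring
  · rw [← Real.rpow_add hx0]
    norm_num

lemma cfc_rpow_mul_rpow_one_sub {X : Matrix n n ℂ} (hX : X.PosSemidef) {s : ℝ}
    (hs0 : 0 ≤ s) (hs1 : s ≤ 1) :
    cfc (fun x : ℝ => x ^ s) X * cfc (fun x : ℝ => x ^ (1 - s)) X = X := by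
  have hXsa : _root_.IsSelfAdjoint X := hX.1
  rw [← cfc_mul _ _ X (rpow_contOn_of_nonneg hs0) (rpow_contOn_of_nonneg (by linarith))]
  calc cfc (fun x : ℝ => x ^ s * x ^ (1 - s)) X
      = cfc (fun x : ℝ => x) X :=
        cfc_congr fun x hx => rpow_mul_rpow_one_sub (spec_nonneg_of_psd hX x hx) hs0
    _ = X := cfc_id' ℝ X

end MatrixTransfer


end PSAux

open PSAux

theorem stmt_5 {n : Type*} [Fintype n] [DecidableEq n] (s : ℝ) (hs0 : 0 ≤ s) (hs1 : s ≤ 1)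
    (A B : Matrix n n ℂ) (hA : A.PosSemidef) (hB : B.PosSemidef) :
    Matrix.trace (A + B - matAbs (A - B)) ≤
      2 * Matrix.trace (cfc (fun x : ℝ => x ^ s) A * cfc (fun x : ℝ => x ^ (1 - s)) B) := by
  have hs1' : (0:ℝ) ≤ 1 - s := by linarith
  have hs1'' : 1 - s ≤ 1 := by linarith
  set D : Matrix n n ℂ := A - B with hD0
  have hD : D.IsHermitian := hA.1.sub hB.1
  have hDsa : _root_.IsSelfAdjoint D := hD
  have hAsa : _root_.IsSelfAdjoint A := hA.1
  have hBsa : _root_.IsSelfAdjoint B := hB.1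
  set P : Matrix n n ℂ := cfc (fun x : ℝ => max x 0) D with hPdef
  set Q : Matrix n n ℂ := cfc (fun x : ℝ => max (-x) 0) D with hQdef
  have hcP : ContinuousOn (fun x : ℝ => max x 0) (spectrum ℝ D) :=
    (continuous_id.max continuous_const).continuousOn
  have hcQ : ContinuousOn (fun x : ℝ => max (-x) 0) (spectrum ℝ D) :=
    (continuous_neg.max continuous_const).continuousOn
  have hPQ : P - Q = A - B := by
    rw [hPdef, hQdef, ← cfc_sub _ _ D hcP hcQ]
    calc cfc (fun x : ℝ => max x 0 - max (-x) 0) D = cfc (fun x : ℝ => x) D := by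
          apply cfc_congr
          intro x _
          have hmm : max x 0 - max (-x) 0 = x := by
            rcases le_total x 0 with h | h
            · rw [sup_eq_right.mpr h, sup_eq_left.mpr (by linarith : (0:ℝ) ≤ -x)]; ring
            · rw [sup_eq_left.mpr h, sup_eq_right.mpr (by linarith : -x ≤ (0:ℝ))]; ring
          simpa using hmm
      _ = D := cfc_id' ℝ D
  have habs : matAbs (A - B) = P + Q := by
    have h1 : Dᴴ * D = cfc (fun x : ℝ => x * x) D := by
      rw [hD.eq, cfc_mul (fun x : ℝ => x) (fun x : ℝ => x) D, cfc_id' ℝ D]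
    rw [show matAbs (A - B) = cfc Real.sqrt (Dᴴ * D) from rfl, h1,
      ← cfc_comp' Real.sqrt (fun x : ℝ => x * x) D Real.continuous_sqrt.continuousOn
        (continuous_id.mul continuous_id).continuousOn]
    calc cfc (fun x : ℝ => Real.sqrt (x * x)) D
        = cfc (fun x : ℝ => max x 0 + max (-x) 0) D := by
          apply cfc_congr
          intro x _
          have hmm : Real.sqrt (x * x) = max x 0 + max (-x) 0 := by
            rw [Real.sqrt_mul_self_eq_abs]
            rcases le_total x 0 with h | h
            · rw [abs_of_nonpos h, sup_eq_right.mpr h,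
                sup_eq_left.mpr (by linarith : (0:ℝ) ≤ -x)]; ring
            · rw [abs_of_nonneg h, sup_eq_left.mpr h,
                sup_eq_right.mpr (by linarith : -x ≤ (0:ℝ))]; ring
          simpa using hmm
      _ = P + Q := cfc_add D _ _ hcP hcQ
  have hP : P.PosSemidef := cfc_psd hD hcP fun x _ => le_max_right _ _
  have hQ : Q.PosSemidef := cfc_psd hD hcQ fun x _ => le_max_right _ _
  set T : Matrix n n ℂ := B + P with hTdef
  have hT : T.PosSemidef := hB.add hP
  have hTsa : _root_.IsSelfAdjoint T := hT.1
  have hTA : (T - A).PosSemidef := by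
    have hQeq : T - A = Q := by
      have h1 : P - Q - (A - B) = 0 := sub_eq_zero.mpr hPQ
      calc T - A = (P - Q - (A - B)) + Q := by rw [hTdef]; abel
        _ = Q := by rw [h1, zero_add]
    rw [hQeq]; exact hQ
  have hTB : (T - B).PosSemidef := by
    have hPeq : T - B = P := by rw [hTdef]; abel
    rw [hPeq]; exact hP
  -- powers
  set As := cfc (fun x : ℝ => x ^ s) A with hAs
  set At := cfc (fun x : ℝ => x ^ (1 - s)) A with hAt
  set Bs := cfc (fun x : ℝ => x ^ s) B with hBs
  set Bt := cfc (fun x : ℝ => x ^ (1 - s)) B with hBt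
  set Ts := cfc (fun x : ℝ => x ^ s) T with hTs
  set Tt := cfc (fun x : ℝ => x ^ (1 - s)) T with hTt
  have h1s : (Ts - As).PosSemidef := LH_M hA hT hTA hs0 hs1
  have h1t : (Tt - At).PosSemidef := LH_M hA hT hTA hs1' hs1''
  have h2s : (Ts - Bs).PosSemidef := LH_M hB hT hTB hs0 hs1
  have h2t : (Tt - Bt).PosSemidef := LH_M hB hT hTB hs1' hs1''
  have hAspsd : As.PosSemidef := cfc_psd hA.1 (rpow_contOn_of_nonneg hs0)
    fun x hx => Real.rpow_nonneg (spec_nonneg_of_psd hA x hx) s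
  have hBtpsd : Bt.PosSemidef := cfc_psd hB.1 (rpow_contOn_of_nonneg hs1')
    fun x hx => Real.rpow_nonneg (spec_nonneg_of_psd hB x hx) _
  -- trace inequalities
  have e1 : 0 ≤ ((Ts - As) * (Tt - Bt)).trace := trace_mul_psd_nonneg h1s h2t
  have e2 : 0 ≤ (As * (Tt - At)).trace := trace_mul_psd_nonneg hAspsd h1t
  have e3 : 0 ≤ ((Ts - Bs) * Bt).trace := trace_mul_psd_nonneg h2s hBtpsd
  have hexp1 : (Ts - As) * (Tt - Bt) = (Ts*Tt - Ts*Bt) - (As*Tt - As*Bt) := by noncomm_ring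
  have hexp2 : As * (Tt - At) = As*Tt - As*At := by noncomm_ring
  have hexp3 : (Ts - Bs) * Bt = Ts*Bt - Bs*Bt := by noncomm_ring
  rw [hexp1, Matrix.trace_sub, Matrix.trace_sub, Matrix.trace_sub] at e1
  rw [hexp2, Matrix.trace_sub] at e2
  rw [hexp3, Matrix.trace_sub] at e3
  have eqA : (As*At).trace = A.trace := by
    rw [hAs, hAt, cfc_rpow_mul_rpow_one_sub hA hs0 hs1]
  have eqB : (Bs*Bt).trace = B.trace := by
    rw [hBs, hBt, cfc_rpow_mul_rpow_one_sub hB hs0 hs1]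
  have eqT : (Ts*Tt).trace = B.trace + P.trace := by
    rw [hTs, hTt, cfc_rpow_mul_rpow_one_sub hT hs0 hs1, hTdef, Matrix.trace_add]
  have hQtr : Q.trace = P.trace - A.trace + B.trace := by
    have h1 := congrArg Matrix.trace hPQ
    rw [Matrix.trace_sub, Matrix.trace_sub] at h1
    linear_combination -h1
  have hfinal : A.trace - P.trace ≤ (As*Bt).trace := by
    have step1 : A.trace + B.trace - (B.trace + P.trace)
        ≤ ((As*Tt).trace + (Ts*Bt).trace) - (Ts*Tt).trace := by
      apply sub_le_sub _ eqT.le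
      have hA' : A.trace ≤ (As*Tt).trace := by
        rw [← eqA]; exact sub_nonneg.mp e2
      have hB' : B.trace ≤ (Ts*Bt).trace := by
        rw [← eqB]; exact sub_nonneg.mp e3
      exact add_le_add hA' hB'
    have step2 : ((As*Tt).trace + (Ts*Bt).trace) - (Ts*Tt).trace ≤ (As*Bt).trace := by
      have h2 : (0:ℂ) ≤ (As*Bt).trace - (((As*Tt).trace + (Ts*Bt).trace) - (Ts*Tt).trace) := by
        calc (0:ℂ) ≤ (Ts*Tt).trace - (Ts*Bt).trace - ((As*Tt).trace - (As*Bt).trace) := e1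
          _ = (As*Bt).trace - (((As*Tt).trace + (Ts*Bt).trace) - (Ts*Tt).trace) := by ring
      exact sub_nonneg.mp h2
    calc A.trace - P.trace = A.trace + B.trace - (B.trace + P.trace) := by ring
      _ ≤ _ := step1
      _ ≤ _ := step2
  have hLHS : (A + B - matAbs (A - B)).trace = 2*(A.trace - P.trace) := by
    rw [Matrix.trace_sub, Matrix.trace_add, habs, Matrix.trace_add, hQtr]
    ring
  rw [hLHS]
  calc 2*(A.trace - P.trace) = (A.trace - P.trace) + (A.trace - P.trace) := by ring
    _ ≤ (As*Bt).trace + (As*Bt).trace := add_le_add hfinal hfinal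
    _ = 2 * (As*Bt).trace := by ring
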